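/- arXiv:0704.1702 — 11 statements merged into one kernel-verified Lean document; each statement's English description precedes it below -/
import Mathlib

section
/- Let K be a positive rational number and B a finite multiset of baskets. If P_2(K, B), P_3(K, B), P_4(K, B), P_5(K, B) are all integers and P_5(K, B) ≤ 4, then P_2(K, B) = 1, P_3(K, B) = 2, P_4(K, B) = 3 and P_5(K, B) = 4. -/
/-- A basket `(b, r)` with `0 < b < r` and `gcd(b, r) = 1`. -/
structure Basket where
  b : ℕ
  r : ℕ
  b_pos : 0 < b
  b_lt_r : b < r
  coprime : Nat.gcd b r = 1

/-- Reid's correction term `l_Q(m)` of a basket `Q` for `m ≥ 2`. -/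
def Basket.corr (Q : Basket) (m : ℕ) : ℚ :=
  ∑ j ∈ Finset.Icc 1 (m - 1),
    ((Q.b * j % Q.r : ℕ) : ℚ) * ((Q.r : ℚ) - ((Q.b * j % Q.r : ℕ) : ℚ)) / (2 * (Q.r : ℚ))

/-- The virtual `m`-th plurigenus `P_m(K, B)` for `m ≥ 2`. -/
def plurigenus (K : ℚ) (B : Multiset Basket) (m : ℕ) : ℚ :=
  (1 / 12 : ℚ) * m * (m - 1) * (2 * m - 1) * K + (B.map (fun Q => Q.corr m)).sum

/-- `b' = b` if `2b ≤ r`, and `b' = r - b` otherwise. -/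
def Basket.b' (Q : Basket) : ℕ := if 2 * Q.b ≤ Q.r then Q.b else Q.r - Q.b

/-- The basket `(1, 2)`. -/
def B12 : Basket := ⟨1, 2, by decide, by decide, by decide⟩

lemma term_nonneg (Q : Basket) (j : ℕ) :
    0 ≤ ((Q.b * j % Q.r : ℕ) : ℚ) * ((Q.r : ℚ) - ((Q.b * j % Q.r : ℕ) : ℚ)) / (2 * (Q.r : ℚ)) := by
  have hr : 0 < Q.r := lt_trans Q.b_pos Q.b_lt_r
  have hx : (Q.b * j % Q.r) ≤ Q.r := (Nat.mod_lt _ hr).le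
  apply div_nonneg
  · exact mul_nonneg (Nat.cast_nonneg _) (sub_nonneg.2 (by exact_mod_cast hx))
  · positivity

lemma corr_nonneg (Q : Basket) (m : ℕ) : 0 ≤ Q.corr m :=
  Finset.sum_nonneg fun j _ => term_nonneg Q j

lemma corr_mono (Q : Basket) (m : ℕ) : Q.corr m ≤ Q.corr (m + 1) := by
  unfold Basket.corr
  apply Finset.sum_le_sum_of_subset_of_nonneg
  · exact Finset.Icc_subset_Icc_right (by omega)
  · exact fun j _ _ => term_nonneg Q j

lemma sum_nonneg' (B : Multiset Basket) (m : ℕ) :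
    0 ≤ (B.map (fun Q => Q.corr m)).sum :=
  Multiset.sum_nonneg (by
    intro x hx
    obtain ⟨Q, _, rfl⟩ := Multiset.mem_map.1 hx
    exact corr_nonneg Q m)

lemma sum_mono' (B : Multiset Basket) (m : ℕ) :
    (B.map (fun Q => Q.corr m)).sum ≤ (B.map (fun Q => Q.corr (m + 1))).sum := by
  apply Multiset.sum_map_le_sum_map
  intro Q _
  exact corr_mono Q m

theorem stmt1 (K : ℚ) (hK : 0 < K) (B : Multiset Basket)
    (h2 : ∃ n : ℤ, plurigenus K B 2 = n)
    (h3 : ∃ n : ℤ, plurigenus K B 3 = n)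
    (h4 : ∃ n : ℤ, plurigenus K B 4 = n)
    (h5 : ∃ n : ℤ, plurigenus K B 5 = n)
    (hle : plurigenus K B 5 ≤ 4) :
    plurigenus K B 2 = 1 ∧ plurigenus K B 3 = 2 ∧
      plurigenus K B 4 = 3 ∧ plurigenus K B 5 = 4 := by
  obtain ⟨n2, e2⟩ := h2
  obtain ⟨n3, e3⟩ := h3
  obtain ⟨n4, e4⟩ := h4
  obtain ⟨n5, e5⟩ := h5
  have hs2 := sum_nonneg' B 2
  have h23 := sum_mono' B 2
  have h34 := sum_mono' B 3
  have h45 := sum_mono' B 4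
  have p2 : plurigenus K B 2 = (1/2) * K + (B.map (fun Q => Q.corr 2)).sum := by
    unfold plurigenus; norm_num
  have p3 : plurigenus K B 3 = (5/2) * K + (B.map (fun Q => Q.corr 3)).sum := by
    unfold plurigenus; norm_num
  have p4 : plurigenus K B 4 = 7 * K + (B.map (fun Q => Q.corr 4)).sum := by
    unfold plurigenus; norm_num
  have p5 : plurigenus K B 5 = 15 * K + (B.map (fun Q => Q.corr 5)).sum := by
    unfold plurigenus; norm_num
  have hP2 : (0 : ℚ) < plurigenus K B 2 := by rw [p2]; nlinarith
  have hP23 : plurigenus K B 2 < plurigenus K B 3 := by rw [p2, p3]; nlinarith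
  have hP34 : plurigenus K B 3 < plurigenus K B 4 := by rw [p3, p4]; nlinarith
  have hP45 : plurigenus K B 4 < plurigenus K B 5 := by rw [p4, p5]; nlinarith
  rw [e2] at hP2 hP23 ⊢
  rw [e3] at hP23 hP34 ⊢
  rw [e4] at hP34 hP45 ⊢
  rw [e5] at hP45 hle ⊢
  have i2 : (0 : ℤ) < n2 := by exact_mod_cast hP2
  have i23 : n2 < n3 := by exact_mod_cast hP23
  have i34 : n3 < n4 := by exact_mod_cast hP34
  have i45 : n4 < n5 := by exact_mod_cast hP45
  have i5 : n5 ≤ 4 := by exact_mod_cast hle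
  have : n2 = 1 ∧ n3 = 2 ∧ n4 = 3 ∧ n5 = 4 := by omega
  obtain ⟨r2, r3, r4, r5⟩ := this
  subst r2 r3 r4 r5
  norm_num
end

section
/- Let K be a positive rational number and B a finite multiset of baskets such that P_2(K, B) = 1. Then B contains at most 3 baskets (counted with multiplicity). -/
lemma corr2_ge (Q : Basket) : (1/4 : ℚ) ≤ Q.corr 2 := by
  have hb : (1:ℚ) ≤ Q.b := by exact_mod_cast Q.b_pos
  have hbr : (Q.b:ℚ) + 1 ≤ Q.r := by exact_mod_cast Q.b_lt_r
  have hr : (2:ℚ) ≤ Q.r := by linarith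
  have hmod : Q.b * 1 % Q.r = Q.b := by
    simp [Nat.mod_eq_of_lt Q.b_lt_r]
  have : Q.corr 2 = (Q.b:ℚ) * ((Q.r:ℚ) - Q.b) / (2 * Q.r) := by
    simp [Basket.corr, Nat.mod_eq_of_lt Q.b_lt_r]
  rw [this, le_div_iff₀ (by positivity)]
  nlinarith [mul_nonneg (by linarith : (0:ℚ) ≤ (Q.b:ℚ) - 1) (by linarith : (0:ℚ) ≤ (Q.r:ℚ) - Q.b - 1)]

lemma sum_corr2_ge (B : Multiset Basket) :
    (Multiset.card B : ℚ) / 4 ≤ (B.map (fun Q => Q.corr 2)).sum := by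
  induction B using Multiset.induction with
  | empty => simp
  | cons Q B ih =>
      simp only [Multiset.map_cons, Multiset.sum_cons, Multiset.card_cons]
      have := corr2_ge Q
      push_cast
      linarith

theorem stmt5 (K : ℚ) (hK : 0 < K) (B : Multiset Basket)
    (h2 : plurigenus K B 2 = 1) :
    Multiset.card B ≤ 3 := by
  have hsum := sum_corr2_ge B
  have hP : plurigenus K B 2 = K/2 + (B.map (fun Q => Q.corr 2)).sum := by
    simp [plurigenus]; ring
  rw [hP] at h2
  have : (Multiset.card B : ℚ) < 4 := by linarith
  have h4 : Multiset.card B < 4 := by exact_mod_cast this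
  omega
end

section
/- Let K be a positive rational number and let B consist of exactly three baskets (b₁, r₁), (b₂, r₂), (b₃, r₃) with r₁ ≤ r₂ ≤ r₃, such that P_2(K, B) = 1. Then 1/r₁ + 1/r₂ + 1/r₃ > 1; consequently either (r₁, r₂) = (2, 2), or (r₁, r₂, r₃) is one of (2, 3, 3), (2, 3, 4), (2, 3, 5). -/
lemma Basket.two_le_r (Q : Basket) : 2 ≤ Q.r := lt_of_le_of_lt Q.b_pos Q.b_lt_r

lemma Basket.corr_two (Q : Basket) :
    Q.corr 2 = (Q.b : ℚ) * ((Q.r : ℚ) - (Q.b : ℚ)) / (2 * (Q.r : ℚ)) := by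
  unfold Basket.corr
  rw [show (2:ℕ) - 1 = 1 from rfl, Finset.Icc_self, Finset.sum_singleton,
    Nat.mul_one, Nat.mod_eq_of_lt Q.b_lt_r]

lemma Basket.corr_two_ge (Q : Basket) :
    Q.corr 2 ≥ 1/2 - 1/2 * (1 / (Q.r : ℚ)) := by
  have hr : (0:ℚ) < Q.r := by
    have := Q.two_le_r
    have : (0:ℕ) < Q.r := by omega
    exact_mod_cast this
  have hb1 : (1:ℚ) ≤ Q.b := by exact_mod_cast Q.b_pos
  have hbr : (Q.b : ℚ) + 1 ≤ Q.r := by exact_mod_cast Q.b_lt_r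
  have key : ((Q.b:ℚ) - 1) * ((Q.r:ℚ) - Q.b - 1) ≥ 0 :=
    mul_nonneg (by linarith) (by linarith)
  rw [Basket.corr_two, ge_iff_le,
    show (1:ℚ)/2 - 1/2 * (1/(Q.r:ℚ)) = ((Q.r:ℚ) - 1)/(2 * Q.r) by field_simp,
    div_le_div_iff₀ (by linarith) (by linarith)]
  nlinarith

theorem stmt6 (K : ℚ) (hK : 0 < K) (Q₁ Q₂ Q₃ : Basket)
    (h12 : Q₁.r ≤ Q₂.r) (h23 : Q₂.r ≤ Q₃.r)
    (h2 : plurigenus K {Q₁, Q₂, Q₃} 2 = 1) :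
    1 / (Q₁.r : ℚ) + 1 / (Q₂.r : ℚ) + 1 / (Q₃.r : ℚ) > 1 ∧
    ((Q₁.r = 2 ∧ Q₂.r = 2) ∨
     (Q₁.r = 2 ∧ Q₂.r = 3 ∧ Q₃.r = 3) ∨
     (Q₁.r = 2 ∧ Q₂.r = 3 ∧ Q₃.r = 4) ∨
     (Q₁.r = 2 ∧ Q₂.r = 3 ∧ Q₃.r = 5)) := by
  have hexp : K / 2 + Q₁.corr 2 + Q₂.corr 2 + Q₃.corr 2 = 1 := by
    simp only [plurigenus, Multiset.insert_eq_cons, Multiset.map_cons, Multiset.map_singleton,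
      Multiset.sum_cons, Multiset.sum_singleton] at h2
    push_cast at h2
    linarith
  have g1 := Q₁.corr_two_ge
  have g2 := Q₂.corr_two_ge
  have g3 := Q₃.corr_two_ge
  have hsum : 1 / (Q₁.r : ℚ) + 1 / (Q₂.r : ℚ) + 1 / (Q₃.r : ℚ) > 1 := by linarith
  refine ⟨hsum, ?_⟩
  have hrec : ∀ (a : ℕ) (Q : Basket), a ≤ Q.r → 0 < a → 1 / (Q.r : ℚ) ≤ 1 / (a : ℚ) := by
    intro a Q ha hapos
    apply one_div_le_one_div_of_le (by exact_mod_cast hapos) (by exact_mod_cast ha)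
  have hr1 : Q₁.r = 2 := by
    by_contra h
    have h3 : 3 ≤ Q₁.r := lt_of_le_of_ne Q₁.two_le_r (Ne.symm h)
    have e1 : 1/(Q₁.r:ℚ) ≤ 1/3 := by exact_mod_cast hrec 3 Q₁ h3 (by norm_num)
    have e2 : 1/(Q₂.r:ℚ) ≤ 1/3 := by exact_mod_cast hrec 3 Q₂ (le_trans h3 h12) (by norm_num)
    have e3 : 1/(Q₃.r:ℚ) ≤ 1/3 := by
      exact_mod_cast hrec 3 Q₃ (le_trans (le_trans h3 h12) h23) (by norm_num)
    linarith
  rcases Nat.eq_or_lt_of_le Q₂.two_le_r with h2' | h2'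
  · exact Or.inl ⟨hr1, h2'.symm⟩
  · have hr2 : Q₂.r = 3 := by
      by_contra h
      have h4 : 4 ≤ Q₂.r := lt_of_le_of_ne h2' (Ne.symm h)
      have e2 : 1/(Q₂.r:ℚ) ≤ 1/4 := by exact_mod_cast hrec 4 Q₂ h4 (by norm_num)
      have e3 : 1/(Q₃.r:ℚ) ≤ 1/4 := by exact_mod_cast hrec 4 Q₃ (le_trans h4 h23) (by norm_num)
      rw [hr1] at hsum
      norm_num at hsum
      simp only [one_div] at e2 e3
      linarith
    have hr3 : Q₃.r < 6 := by
      by_contra h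
      push_neg at h
      have e3 : 1/(Q₃.r:ℚ) ≤ 1/6 := by exact_mod_cast hrec 6 Q₃ h (by norm_num)
      rw [hr1, hr2] at hsum
      norm_num at hsum
      simp only [one_div] at e3
      linarith
    have hr3' : 3 ≤ Q₃.r := hr2 ▸ h23
    interval_cases h : Q₃.r
    · exact Or.inr (Or.inl ⟨hr1, hr2, rfl⟩)
    · exact Or.inr (Or.inr (Or.inl ⟨hr1, hr2, rfl⟩))
    · exact Or.inr (Or.inr (Or.inr ⟨hr1, hr2, rfl⟩))
end

section
/- Let K be a positive rational number and let B consist of exactly three baskets (1, 2), (1, 2), (b, r) with r ≥ 2, such that P_2(K, B) = 1 and P_3(K, B) = 2. Then K = 1/r, b' = 1 (i.e. b = 1 or b = r − 1), and P_4(K, B) = 4 if r ≥ 3 while P_4(K, B) = 5 if r = 2. -/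
theorem stmt7 (K : ℚ) (hK : 0 < K) (Q : Basket)
    (h2 : plurigenus K {B12, B12, Q} 2 = 1)
    (h3 : plurigenus K {B12, B12, Q} 3 = 2) :
    K = 1 / (Q.r : ℚ) ∧ Q.b' = 1 ∧ (Q.b = 1 ∨ Q.b = Q.r - 1) ∧
    (3 ≤ Q.r → plurigenus K {B12, B12, Q} 4 = 4) ∧
    (Q.r = 2 → plurigenus K {B12, B12, Q} 4 = 5) := by
  clear h3
  have hb1 : 0 < Q.b := Q.b_pos
  have hblt : Q.b < Q.r := Q.b_lt_r
  have hr2 : 2 ≤ Q.r := by omega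
  have hr0 : (Q.r : ℚ) ≠ 0 := by positivity
  have hexp : ∀ m : ℕ, plurigenus K {B12, B12, Q} m =
      (1/12 : ℚ) * m * (m - 1) * (2 * m - 1) * K + B12.corr m + B12.corr m + Q.corr m := by
    intro m
    simp [plurigenus]
    ring
  have hI1 : Finset.Icc 1 1 = ({1} : Finset ℕ) := by decide
  have hI3 : Finset.Icc 1 3 = ({1, 2, 3} : Finset ℕ) := by decide
  have c2 : B12.corr 2 = 1/4 := by
    rw [Basket.corr]; norm_num [hI1, B12]
  have c4 : B12.corr 4 = 1/2 := by
    rw [Basket.corr]; norm_num [hI3, B12]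
  have hq2 : Q.corr 2 = (Q.b : ℚ) * ((Q.r : ℚ) - Q.b) / (2 * Q.r) := by
    rw [Basket.corr]
    norm_num [hI1, Nat.mod_eq_of_lt hblt]
  -- equation from h2
  rw [hexp, c2, hq2] at h2
  have e2 : K / 2 + (Q.b : ℚ) * ((Q.r : ℚ) - Q.b) / (2 * Q.r) = 1 / 2 := by
    push_cast at h2
    linarith
  -- the natural number x = b (r - b)
  have hxcast : ((Q.b * (Q.r - Q.b) : ℕ) : ℚ) = (Q.b : ℚ) * ((Q.r : ℚ) - Q.b) := by
    push_cast [Nat.cast_sub hblt.le]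
    ring
  have hrpos : (0 : ℚ) < Q.r := by positivity
  have e2' : (Q.b : ℚ) * ((Q.r : ℚ) - Q.b) = (1 - K) * Q.r := by
    field_simp at e2
    linarith
  have hxlt : Q.b * (Q.r - Q.b) < Q.r := by
    by_contra h
    push_neg at h
    have : (Q.r : ℚ) ≤ ((Q.b * (Q.r - Q.b) : ℕ) : ℚ) := by exact_mod_cast h
    rw [hxcast, e2'] at this
    nlinarith
  have hxge : Q.r - 1 ≤ Q.b * (Q.r - Q.b) := by
    have h1 : (1 : ℤ) ≤ (Q.b : ℤ) := by exact_mod_cast hb1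
    have h2' : (Q.b : ℤ) + 1 ≤ (Q.r : ℤ) := by exact_mod_cast hblt
    have key : ((Q.r : ℤ) - 1) ≤ (Q.b : ℤ) * ((Q.r : ℤ) - Q.b) := by nlinarith
    zify [hblt.le, show 1 ≤ Q.r by omega]
    exact key
  have hxeq : Q.b * (Q.r - Q.b) = Q.r - 1 := by omega
  -- b = 1 or b = r - 1
  have hbor : Q.b = 1 ∨ Q.b = Q.r - 1 := by
    have hz : ((Q.b : ℤ) - 1) * ((Q.r : ℤ) - Q.b - 1) = 0 := by
      have : (Q.b : ℤ) * ((Q.r : ℤ) - Q.b) = (Q.r : ℤ) - 1 := by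
        have := hxeq
        zify [hblt.le, show 1 ≤ Q.r by omega] at this
        linarith
      nlinarith
    rcases mul_eq_zero.1 hz with h | h
    · left; omega
    · right; omega
  -- K = 1 / r
  have hKr : K = 1 / (Q.r : ℚ) := by
    have hx : (Q.b : ℚ) * ((Q.r : ℚ) - Q.b) = (Q.r : ℚ) - 1 := by
      rw [← hxcast, hxeq]
      push_cast [Nat.cast_sub (show 1 ≤ Q.r by omega)]
      ring
    rw [hx] at e2'
    field_simp
    linarith
  refine ⟨hKr, ?_, hbor, ?_, ?_⟩
  · rw [Basket.b']
    split <;> omega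
  -- plurigenus at 4
  all_goals {
    intro hr
    have e4 : plurigenus K {B12, B12, Q} 4 = 7 * K + 1 +
        (((Q.b * 1 % Q.r : ℕ) : ℚ) * ((Q.r : ℚ) - (Q.b * 1 % Q.r : ℕ)) +
         ((Q.b * 2 % Q.r : ℕ) : ℚ) * ((Q.r : ℚ) - (Q.b * 2 % Q.r : ℕ)) +
         ((Q.b * 3 % Q.r : ℕ) : ℚ) * ((Q.r : ℚ) - (Q.b * 3 % Q.r : ℕ))) / (2 * Q.r) := by
      rw [hexp, c4, Basket.corr, hI3]
      rw [Finset.sum_insert (by decide), Finset.sum_insert (by decide), Finset.sum_singleton]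
      push_cast
      ring
    rw [e4, hKr]
    first
    | -- case r = 2
      (have hb : Q.b = 1 := by omega
       rw [hb, hr]
       norm_num)
    | -- case r ≥ 3
      (rcases hbor with hb | hb
       · -- b = 1
         have m1 : Q.b * 1 % Q.r = 1 := by rw [hb]; exact Nat.mod_eq_of_lt (by omega)
         have m2 : Q.b * 2 % Q.r = 2 := by rw [hb]; simp [Nat.mod_eq_of_lt (by omega : 2 < Q.r)]
         rcases eq_or_lt_of_le hr with hr3 | hr4
         · have m3 : Q.b * 3 % Q.r = 0 := by rw [hb, ← hr3]
           rw [m1, m2, m3, ← hr3]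
           norm_num
         · have m3 : Q.b * 3 % Q.r = 3 := by rw [hb]; simp [Nat.mod_eq_of_lt (by omega : 3 < Q.r)]
           rw [m1, m2, m3]
           push_cast
           field_simp
           ring
       · -- b = r - 1
         have m1 : Q.b * 1 % Q.r = Q.r - 1 := by
           rw [hb]; simp [Nat.mod_eq_of_lt (by omega : Q.r - 1 < Q.r)]
         have m2 : Q.b * 2 % Q.r = Q.r - 2 := by
           rw [hb, show (Q.r - 1) * 2 = Q.r + (Q.r - 2) by omega, Nat.add_mod_left,
             Nat.mod_eq_of_lt (by omega)]
         rcases eq_or_lt_of_le hr with hr3 | hr4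
         · have m3 : Q.b * 3 % Q.r = 0 := by
             rw [hb, ← hr3]
           rw [m1, m2, m3, ← hr3]
           norm_num
         · have m3 : Q.b * 3 % Q.r = Q.r - 3 := by
             rw [hb, show (Q.r - 1) * 3 = (Q.r - 3) + 2 * Q.r by omega,
               Nat.add_mul_mod_self_right, Nat.mod_eq_of_lt (by omega)]
           rw [m1, m2, m3]
           push_cast [Nat.cast_sub (show 1 ≤ Q.r by omega),
             Nat.cast_sub (show 2 ≤ Q.r by omega), Nat.cast_sub (show 3 ≤ Q.r by omega)]
           field_simp
           ring)
  }
end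

section
/- Let K be a positive rational number and let B consist of exactly three baskets (1, 2), (b₂, 3), (b₃, 3), such that P_2(K, B) = 1 and P_3(K, B) = 2. Then K = 1/6, P_4(K, B) = 3 and P_5(K, B) = 5. -/
lemma corrB12 (m : ℕ) (hm : m ≤ 5) : B12.corr m =
    #[0,0,(1:ℚ)/4,1/4,1/2,1/2].getD m 0 := by
  interval_cases m <;> norm_num [Basket.corr, B12, Finset.sum_Icc_succ_top]

lemma corr3 (Q : Basket) (h : Q.r = 3) (m : ℕ) (hm : m ≤ 5) : Q.corr m =
    #[0,0,(1:ℚ)/3,2/3,2/3,1].getD m 0 := by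
  obtain ⟨b, r, hb0, hbr, hco⟩ := Q
  subst h
  unfold Basket.corr
  simp only at *
  interval_cases b <;> interval_cases m <;>
    norm_num [Finset.sum_Icc_succ_top]

theorem stmt8 (K : ℚ) (hK : 0 < K) (Q₂ Q₃ : Basket)
    (hr₂ : Q₂.r = 3) (hr₃ : Q₃.r = 3)
    (h2 : plurigenus K {B12, Q₂, Q₃} 2 = 1)
    (h3 : plurigenus K {B12, Q₂, Q₃} 3 = 2) :
    K = 1 / 6 ∧ plurigenus K {B12, Q₂, Q₃} 4 = 3 ∧
      plurigenus K {B12, Q₂, Q₃} 5 = 5 := by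
  have c2 := corr3 Q₂ hr₂
  have c3 := corr3 Q₃ hr₃
  have hK6 : K = 1/6 := by
    simp [plurigenus, Multiset.map_cons, corrB12, c2, c3] at h2
    linarith
  subst hK6
  refine ⟨rfl, ?_, ?_⟩ <;>
    simp [plurigenus, Multiset.map_cons, corrB12, c2, c3] <;> norm_num
end

section
/- Let K be a positive rational number and let B consist of exactly three baskets (1, 2), (b₂, 3), (b₃, 5), such that P_2(K, B) = 1 and P_3(K, B) = 2. Then K = 1/30, b₃ ∈ {1, 4}, P_4(K, B) = 3 and P_5(K, B) = 4. -/
private lemma sumIcc1 (f : ℕ → ℚ) : ∑ j ∈ Finset.Icc 1 1, f j = f 1 := by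
  rw [show Finset.Icc 1 1 = {1} by rfl]; simp

private lemma sumIcc2 (f : ℕ → ℚ) : ∑ j ∈ Finset.Icc 1 2, f j = f 1 + f 2 := by
  rw [show Finset.Icc 1 2 = {1, 2} by rfl]; simp [Finset.sum_insert]

private lemma sumIcc3 (f : ℕ → ℚ) : ∑ j ∈ Finset.Icc 1 3, f j = f 1 + f 2 + f 3 := by
  rw [show Finset.Icc 1 3 = {1, 2, 3} by rfl]; simp [Finset.sum_insert]; ring

private lemma sumIcc4 (f : ℕ → ℚ) : ∑ j ∈ Finset.Icc 1 4, f j = f 1 + f 2 + f 3 + f 4 := by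
  rw [show Finset.Icc 1 4 = {1, 2, 3, 4} by rfl]; simp [Finset.sum_insert]; ring

set_option maxHeartbeats 2000000 in
theorem stmt10 (K : ℚ) (hK : 0 < K) (Q₂ Q₃ : Basket)
    (hr₂ : Q₂.r = 3) (hr₃ : Q₃.r = 5)
    (h2 : plurigenus K {B12, Q₂, Q₃} 2 = 1)
    (h3 : plurigenus K {B12, Q₂, Q₃} 3 = 2) :
    K = 1 / 30 ∧ (Q₃.b = 1 ∨ Q₃.b = 4) ∧
      plurigenus K {B12, Q₂, Q₃} 4 = 3 ∧
      plurigenus K {B12, Q₂, Q₃} 5 = 4 := by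
  obtain ⟨b₂, r₂, hb₂pos, hb₂lt, hcop₂⟩ := Q₂
  obtain ⟨b₃, r₃, hb₃pos, hb₃lt, hcop₃⟩ := Q₃
  subst hr₂ hr₃
  interval_cases b₂ <;> interval_cases b₃ <;>
    norm_num [plurigenus, Basket.corr, B12, sumIcc1, sumIcc2, sumIcc3, sumIcc4] at h2 h3 ⊢ <;>
    first
      | (exfalso; linarith)
      | refine ⟨by linarith, by linarith, by linarith⟩
end

section
/- Let K be a positive rational number and let B consist of exactly two baskets (b₁, r₁), (b₂, r₂) with r₁ ≤ r₂, such that P_2(K, B) = 1 and P_3(K, B) = 2. Then b'₁ = 1, b'₂ = 2, 1 + K = 1/r₁ + 4/r₂, and (r₁, r₂) is one of (2, 5), (2, 7), (3, 5), (4, 5). -/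
lemma Basket.r_pos (Q : Basket) : 0 < Q.r := lt_trans Q.b_pos Q.b_lt_r

lemma Basket.b'_pos (Q : Basket) : 1 ≤ Q.b' := by
  have h1 := Q.b_pos; have h2 := Q.b_lt_r
  unfold Basket.b'; split <;> omega

lemma corr2_eq (Q : Basket) :
    Q.corr 2 = (Q.b' : ℚ) * ((Q.r : ℚ) - (Q.b' : ℚ)) / (2 * Q.r) := by
  have hb := Q.b_pos; have hbr := Q.b_lt_r
  unfold Basket.corr Basket.b'
  rw [show Finset.Icc 1 (2-1) = {1} from rfl, Finset.sum_singleton]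
  rw [Nat.mul_one, Nat.mod_eq_of_lt hbr]
  split
  · rfl
  · rw [Nat.cast_sub (le_of_lt hbr)]; ring

lemma key (Q : Basket) : 5 * Q.corr 2 - Q.corr 3 = (Q.b' : ℚ) := by
  have hb := Q.b_pos; have hbr := Q.b_lt_r; have hg := Q.coprime
  have hr : (Q.r : ℚ) ≠ 0 := Nat.cast_ne_zero.mpr Q.r_pos.ne'
  unfold Basket.corr Basket.b'
  rw [show Finset.Icc 1 (2-1) = {1} from rfl, Finset.sum_singleton,
    show Finset.Icc 1 (3-1) = {1, 2} from rfl,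
    Finset.sum_insert (by decide), Finset.sum_singleton]
  rw [Nat.mul_one, Nat.mod_eq_of_lt hbr]
  rcases lt_trichotomy (2 * Q.b) Q.r with h | h | h
  · rw [if_pos (le_of_lt h), show Q.b * 2 = 2 * Q.b from by ring,
      Nat.mod_eq_of_lt h]
    push_cast
    field_simp
    ring
  · -- 2b = r forces b = 1, r = 2
    have hb1 : Q.b = 1 := by
      have : Nat.gcd Q.b Q.r = Q.b := by
        rw [← h]; exact Nat.gcd_eq_left (dvd_mul_left Q.b 2)
      omega
    have hr2 : Q.r = 2 := by omega
    rw [if_pos (le_of_eq h), hb1, hr2]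
    norm_num
  · rw [if_neg (by omega), show Q.b * 2 = 2 * Q.b from by ring,
      Nat.mod_eq_sub_mod (by omega), Nat.mod_eq_of_lt (by omega)]
    rw [Nat.cast_sub (by omega), Nat.cast_sub (le_of_lt hbr)]
    push_cast
    field_simp
    ring

lemma b'_two (Q : Basket) (h : Q.b' = 2) : 5 ≤ Q.r ∧ Q.r % 2 = 1 := by
  have hb := Q.b_pos; have hbr := Q.b_lt_r; have hg := Q.coprime
  have hodd : Q.r % 2 = 1 := by
    rcases Nat.mod_two_eq_zero_or_one Q.r with h2 | h2
    · exfalso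
      have hd : (2 : ℕ) ∣ Q.r := Nat.dvd_of_mod_eq_zero h2
      have hbd : (2 : ℕ) ∣ Q.b := by
        unfold Basket.b' at h
        split at h
        · omega
        · have : Q.b = Q.r - 2 := by omega
          omega
      have := Nat.dvd_gcd hbd hd
      rw [hg] at this
      omega
    · exact h2
  constructor
  · unfold Basket.b' at h
    split at h <;> omega
  · exact hodd

theorem stmt12 (K : ℚ) (hK : 0 < K) (Q₁ Q₂ : Basket)
    (h12 : Q₁.r ≤ Q₂.r)
    (h2 : plurigenus K {Q₁, Q₂} 2 = 1)
    (h3 : plurigenus K {Q₁, Q₂} 3 = 2) :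
    Q₁.b' = 1 ∧ Q₂.b' = 2 ∧
    1 + K = 1 / (Q₁.r : ℚ) + 4 / (Q₂.r : ℚ) ∧
    ((Q₁.r = 2 ∧ Q₂.r = 5) ∨ (Q₁.r = 2 ∧ Q₂.r = 7) ∨
     (Q₁.r = 3 ∧ Q₂.r = 5) ∨ (Q₁.r = 4 ∧ Q₂.r = 5)) := by
  have hr1 : 0 < Q₁.r := Q₁.r_pos
  have hr2 : 0 < Q₂.r := Q₂.r_pos
  have hr1q : (0 : ℚ) < Q₁.r := by exact_mod_cast hr1
  have hr2q : (0 : ℚ) < Q₂.r := by exact_mod_cast hr2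
  simp only [plurigenus, Multiset.insert_eq_cons, Multiset.map_cons,
    Multiset.map_singleton, Multiset.sum_cons, Multiset.sum_singleton] at h2 h3
  push_cast at h2 h3
  have hsumq : (Q₁.b' : ℚ) + (Q₂.b' : ℚ) = 3 := by
    rw [← key Q₁, ← key Q₂]; linarith
  have hsum : Q₁.b' + Q₂.b' = 3 := by exact_mod_cast hsumq
  have hb1 := Q₁.b'_pos
  have hb2 := Q₂.b'_pos
  have hcase : (Q₁.b' = 1 ∧ Q₂.b' = 2) ∨ (Q₁.b' = 2 ∧ Q₂.b' = 1) := by omega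
  have hKeq : K = 2 - 2 * Q₁.corr 2 - 2 * Q₂.corr 2 := by linarith
  rcases hcase with ⟨e1, e2⟩ | ⟨e1, e2⟩
  · -- main case
    obtain ⟨hr25, hr2odd⟩ := b'_two Q₂ e2
    have hs1 : Q₁.corr 2 = ((Q₁.r : ℚ) - 1) / (2 * Q₁.r) := by
      rw [corr2_eq, e1]; push_cast; ring
    have hs2 : Q₂.corr 2 = 2 * ((Q₂.r : ℚ) - 2) / (2 * Q₂.r) := by
      rw [corr2_eq, e2]; push_cast; ring
    have hmain : 1 + K = 1 / (Q₁.r : ℚ) + 4 / (Q₂.r : ℚ) := by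
      rw [hKeq, hs1, hs2]
      field_simp
      ring
    refine ⟨e1, e2, hmain, ?_⟩
    have hgt : (1 : ℚ) < 1 / (Q₁.r : ℚ) + 4 / (Q₂.r : ℚ) := by linarith
    have hnat : Q₁.r * Q₂.r < Q₂.r + 4 * Q₁.r := by
      have : ((Q₁.r * Q₂.r : ℕ) : ℚ) < ((Q₂.r + 4 * Q₁.r : ℕ) : ℚ) := by
        push_cast
        rw [div_add_div _ _ (ne_of_gt hr1q) (ne_of_gt hr2q), lt_div_iff₀ (by positivity)] at hgt
        linarith
      exact_mod_cast this
    -- r₁ ≥ 2 since b ≥ 1 and b < r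
    have hr12 : 2 ≤ Q₁.r := by have := Q₁.b_pos; have := Q₁.b_lt_r; omega
    have hr1lt : Q₁.r < 5 := by nlinarith
    have hc : Q₁.r = 2 ∨ Q₁.r = 3 ∨ Q₁.r = 4 := by omega
    rcases hc with h | h | h <;> rw [h] at hnat <;> omega
  · -- contradiction case: K ≤ 0
    exfalso
    obtain ⟨hr15, _⟩ := b'_two Q₁ e1
    have hr25 : 5 ≤ Q₂.r := le_trans hr15 h12
    have hs1 : Q₁.corr 2 = 1 - 2 / (Q₁.r : ℚ) := by
      rw [corr2_eq, e1]; push_cast; field_simp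
    have hs2 : Q₂.corr 2 = 1 / 2 - 1 / (2 * (Q₂.r : ℚ)) := by
      rw [corr2_eq, e2]; push_cast; field_simp
    have h15 : 2 / (Q₁.r : ℚ) ≤ 2 / 5 := by
      apply div_le_div_of_nonneg_left (by norm_num) (by norm_num)
      exact_mod_cast hr15
    have h25 : 1 / (2 * (Q₂.r : ℚ)) ≤ 1 / 10 := by
      apply div_le_div_of_nonneg_left (by norm_num) (by norm_num)
      have : (5 : ℚ) ≤ Q₂.r := by exact_mod_cast hr25
      linarith
    rw [hKeq, hs1, hs2] at hK
    linarith
end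

section
/- Let K be a positive rational number and let B consist of exactly two baskets (1, 2), (b, 5), such that P_2(K, B) = 1 and P_3(K, B) = 2. Then K = 3/10, b ∈ {2, 3}, P_4(K, B) = 4 and P_5(K, B) = 7. -/
lemma icc1 : Finset.Icc 1 1 = ({1} : Finset ℕ) := rfl
lemma icc2 : Finset.Icc 1 2 = ({1, 2} : Finset ℕ) := rfl
lemma icc3 : Finset.Icc 1 3 = ({1, 2, 3} : Finset ℕ) := rfl
lemma icc4 : Finset.Icc 1 4 = ({1, 2, 3, 4} : Finset ℕ) := rfl

theorem stmt15 (K : ℚ) (hK : 0 < K) (Q : Basket) (hr : Q.r = 5)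
    (h2 : plurigenus K {B12, Q} 2 = 1)
    (h3 : plurigenus K {B12, Q} 3 = 2) :
    K = 3 / 10 ∧ (Q.b = 2 ∨ Q.b = 3) ∧
      plurigenus K {B12, Q} 4 = 4 ∧ plurigenus K {B12, Q} 5 = 7 := by
  obtain ⟨b, r, hb0, hbr, hcop⟩ := Q
  change r = 5 at hr
  subst hr
  change b < 5 at hbr
  have key : ∀ m, plurigenus K {B12, (⟨b, 5, hb0, hbr, hcop⟩ : Basket)} m =
      (1 / 12 : ℚ) * m * (m - 1) * (2 * m - 1) * K +
      (B12.corr m + (⟨b, 5, hb0, hbr, hcop⟩ : Basket).corr m) := by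
    intro m
    simp [plurigenus]
  rw [key] at h2 h3
  norm_num [Basket.corr, B12, icc1, icc2] at h2 h3
  interval_cases b
  · linarith
  · refine ⟨by linarith, Or.inl rfl, ?_, ?_⟩ <;>
      rw [key] <;> norm_num [Basket.corr, B12, icc3, icc4] <;> linarith
  · refine ⟨by linarith, Or.inr rfl, ?_, ?_⟩ <;>
      rw [key] <;> norm_num [Basket.corr, B12, icc3, icc4] <;> linarith
  · linarith
end

section
/- Let K be a positive rational number and let B consist of exactly two baskets (b₁, 3), (b₂, 5), such that P_2(K, B) = 1 and P_3(K, B) = 2. Then K = 2/15, b₂ ∈ {2, 3}, P_4(K, B) = 3 and P_5(K, B) = 5. -/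
def gterm (b r j : ℕ) : ℚ :=
  ((b * j % r : ℕ) : ℚ) * ((r : ℚ) - ((b * j % r : ℕ) : ℚ)) / (2 * (r : ℚ))

lemma corr2 (Q : Basket) : Q.corr 2 = gterm Q.b Q.r 1 := by
  show (∑ j ∈ Finset.Icc 1 1, _) = _
  rw [show Finset.Icc 1 1 = ({1} : Finset ℕ) from rfl, Finset.sum_singleton]
  rfl

lemma corr3_s16 (Q : Basket) : Q.corr 3 = gterm Q.b Q.r 1 + gterm Q.b Q.r 2 := by
  show (∑ j ∈ Finset.Icc 1 2, _) = _
  rw [show Finset.Icc 1 2 = ({1, 2} : Finset ℕ) from rfl]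
  rw [Finset.sum_insert (by decide), Finset.sum_singleton]
  rfl

lemma corr4 (Q : Basket) :
    Q.corr 4 = gterm Q.b Q.r 1 + gterm Q.b Q.r 2 + gterm Q.b Q.r 3 := by
  show (∑ j ∈ Finset.Icc 1 3, _) = _
  rw [show Finset.Icc 1 3 = ({1, 2, 3} : Finset ℕ) from rfl]
  rw [Finset.sum_insert (by decide), Finset.sum_insert (by decide),
    Finset.sum_singleton]
  simp only [gterm]; ring

lemma corr5 (Q : Basket) :
    Q.corr 5 = gterm Q.b Q.r 1 + gterm Q.b Q.r 2 + gterm Q.b Q.r 3 + gterm Q.b Q.r 4 := by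
  show (∑ j ∈ Finset.Icc 1 4, _) = _
  rw [show Finset.Icc 1 4 = ({1, 2, 3, 4} : Finset ℕ) from rfl]
  rw [Finset.sum_insert (by decide), Finset.sum_insert (by decide),
    Finset.sum_insert (by decide), Finset.sum_singleton]
  simp only [gterm]; ring

lemma plurig_eval (K : ℚ) (Q₁ Q₂ : Basket) (m : ℕ) :
    plurigenus K {Q₁, Q₂} m
      = (1 / 12 : ℚ) * m * (m - 1) * (2 * m - 1) * K + Q₁.corr m + Q₂.corr m := by
  simp [plurigenus]; ring

theorem stmt16 (K : ℚ) (hK : 0 < K) (Q₁ Q₂ : Basket)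
    (hr₁ : Q₁.r = 3) (hr₂ : Q₂.r = 5)
    (h2 : plurigenus K {Q₁, Q₂} 2 = 1)
    (h3 : plurigenus K {Q₁, Q₂} 3 = 2) :
    K = 2 / 15 ∧ (Q₂.b = 2 ∨ Q₂.b = 3) ∧
      plurigenus K {Q₁, Q₂} 4 = 3 ∧ plurigenus K {Q₁, Q₂} 5 = 5 := by
  obtain ⟨b₁, r₁, hp₁, hlt₁, hc₁⟩ := Q₁
  obtain ⟨b₂, r₂, hp₂, hlt₂, hc₂⟩ := Q₂
  simp only at hr₁ hr₂ ⊢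
  subst hr₁ hr₂
  rw [plurig_eval, corr2, corr2] at h2
  rw [plurig_eval, corr3_s16, corr3_s16] at h3
  rw [plurig_eval, plurig_eval, corr4, corr4, corr5, corr5]
  interval_cases b₁ <;> interval_cases b₂ <;>
    norm_num [gterm] at h2 h3 ⊢ <;>
    first
      | linarith
      | exact ⟨by linarith, by linarith, by linarith⟩
end

section
/- Let K be a positive rational number and let B consist of a single basket (b, r), such that P_2(K, B) = 1 and P_3(K, B) = 2. Then b' = 3 and either r = 7, K = 2/7 and P_4(K, B) = 4, or r = 8, K = 1/8, P_4(K, B) = 3 and P_5(K, B) = 5. -/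
theorem stmt17 (K : ℚ) (hK : 0 < K) (Q : Basket)
    (h2 : plurigenus K {Q} 2 = 1)
    (h3 : plurigenus K {Q} 3 = 2) :
    Q.b' = 3 ∧
    ((Q.r = 7 ∧ K = 2 / 7 ∧ plurigenus K {Q} 4 = 4) ∨
     (Q.r = 8 ∧ K = 1 / 8 ∧ plurigenus K {Q} 4 = 3 ∧ plurigenus K {Q} 5 = 5)) := by
  obtain ⟨b, r, hb, hbr, hg⟩ := Q
  have hr : 0 < r := hb.trans hbr
  have hrQ : ((r:ℚ)) ≠ 0 := by positivity
  simp only [plurigenus, Basket.corr, Multiset.map_singleton, Multiset.sum_singleton] at h2 h3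
  rw [show Finset.Icc 1 (2-1) = ({1} : Finset ℕ) from rfl, Finset.sum_singleton] at h2
  rw [show Finset.Icc 1 (3-1) = ({1,2} : Finset ℕ) from rfl,
      Finset.sum_pair (by norm_num : (1:ℕ) ≠ 2)] at h3
  have m1 : b * 1 % r = b := by rw [mul_one]; exact Nat.mod_eq_of_lt hbr
  rw [m1] at h2 h3
  set a2 := b * 2 % r with ha2def
  have ha2 : a2 < r := Nat.mod_lt _ hr
  push_cast at h2 h3
  have E1 : K * r + (b:ℚ) * ((r:ℚ) - b) = 2 * r := by
    field_simp at h2; linarith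
  have E2 : (a2:ℚ) * ((r:ℚ) - a2) + 6 * r = 4 * ((b:ℚ) * ((r:ℚ) - b)) := by
    field_simp at h3; nlinarith [E1]
  -- to ℕ
  have cb : ((r:ℚ) - b) = ((r - b : ℕ) : ℚ) := by
    push_cast [Nat.cast_sub hbr.le]; ring
  have ca : ((r:ℚ) - a2) = ((r - a2 : ℕ) : ℚ) := by
    push_cast [Nat.cast_sub ha2.le]; ring
  have hN2 : a2 * (r - a2) + 6 * r = 4 * (b * (r - b)) := by
    rw [ca, cb] at E2; exact_mod_cast E2
  have hN1 : b * (r - b) < 2 * r := by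
    have hKr : (0:ℚ) < K * r := mul_pos hK (by positivity)
    have : ((b * (r - b) : ℕ) : ℚ) < 2 * r := by push_cast [← cb]; linarith
    exact_mod_cast this
  -- b'
  obtain ⟨c, hcase⟩ : ∃ c, (c = b ∧ 2 * b ≤ r) ∨ (c = r - b ∧ r < 2 * b) := by
    rcases le_or_gt (2 * b) r with h | h
    · exact ⟨b, Or.inl ⟨rfl, h⟩⟩
    · exact ⟨r - b, Or.inr ⟨rfl, h⟩⟩
  have hcb : 2 * c ≤ r := by rcases hcase with ⟨h1, h2⟩ | ⟨h1, h2⟩ <;> omega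
  have hc1 : 1 ≤ c := by rcases hcase with ⟨h1, h2⟩ | ⟨h1, h2⟩ <;> omega
  have hc : b * (r - b) = c * (r - c) := by
    rcases hcase with ⟨h1, _⟩ | ⟨h1, _⟩
    · rw [h1]
    · rw [h1, show r - (r - b) = b from by omega, Nat.mul_comm]
  rw [hc] at hN1 hN2
  have hclt : c < 4 := by
    by_contra h
    push_neg at h
    have h1 : c * r ≤ 2 * (c * (r - c)) := by
      calc c * r ≤ c * (2 * (r - c)) := Nat.mul_le_mul_left c (by omega)
        _ = 2 * (c * (r - c)) := by ring
    have h2 : 4 * r ≤ c * r := Nat.mul_le_mul_right r h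
    generalize c * (r - c) = t at h1 hN1
    generalize c * r = s at h1 h2
    omega
  have hc3 : c = 1 ∨ c = 2 ∨ c = 3 := by omega
  rcases hc3 with h | h | h
  · -- c = 1 impossible
    subst h
    exfalso
    generalize a2 * (r - a2) = t at hN2
    omega
  · -- c = 2 impossible
    exfalso
    have hr8 : 8 ≤ r := by
      subst h
      have := hN2
      generalize a2 * (r - a2) = t at this
      omega
    have hb2 : b = 2 ∨ b = r - 2 := by rcases hcase with ⟨h1, _⟩ | ⟨h1, _⟩ <;> omega
    rcases hb2 with hb2 | hb2
    · have : a2 = 4 := by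
        rw [ha2def, hb2]
        exact Nat.mod_eq_of_lt (by omega)
      rw [this, h] at hN2
      omega
    · have : a2 = r - 4 := by
        rw [ha2def, hb2, show (r - 2) * 2 = r + (r - 4) from by omega, Nat.add_mod_left]
        exact Nat.mod_eq_of_lt (by omega)
      rw [this, h, show r - (r - 4) = 4 from by omega] at hN2
      omega
  · -- c = 3
    subst h
    have hr6 : 6 ≤ r := by
      have := hN2
      generalize a2 * (r - a2) = t at this
      omega
    have hr9 : r < 9 := by omega
    have hb3 : b = 3 ∨ b = r - 3 := by rcases hcase with ⟨h1, _⟩ | ⟨h1, _⟩ <;> omega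
    have hr78 : r = 7 ∨ r = 8 := by
      rcases (by omega : r = 6 ∨ r = 7 ∨ r = 8) with h6 | h | h
      · exfalso
        have : b = 3 := by omega
        rw [this, h6] at hg
        simp at hg
      · left; exact h
      · right; exact h
    have hbp : Basket.b' ⟨b, r, hb, hbr, hg⟩ = 3 := by
      rcases hcase with ⟨h1, h2'⟩ | ⟨h1, h2'⟩
      · simp only [Basket.b']; rw [if_pos h2']; omega
      · simp only [Basket.b']; rw [if_neg (by omega)]; omega
    refine ⟨hbp, ?_⟩
    rcases hr78 with hr7 | hr8
    · -- r = 7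
      subst hr7
      have hb34 : b = 3 ∨ b = 4 := by omega
      have hKv : K = 2 / 7 := by
        rcases hb34 with h | h <;> subst h <;> push_cast at E1 <;> linarith
      subst hKv
      refine Or.inl ⟨rfl, rfl, ?_⟩
      rcases hb34 with h | h <;> subst h <;>
        norm_num [plurigenus, Basket.corr,
          show Finset.Icc 1 (4-1) = ({1,2,3} : Finset ℕ) from rfl,
          Finset.sum_insert, Finset.mem_insert, Finset.mem_singleton,
          Finset.sum_singleton]
    · -- r = 8
      subst hr8
      have hb35 : b = 3 ∨ b = 5 := by omega
      have hKv : K = 1 / 8 := by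
        rcases hb35 with h | h <;> subst h <;> push_cast at E1 <;> linarith
      subst hKv
      refine Or.inr ⟨rfl, rfl, ?_, ?_⟩ <;>
        rcases hb35 with h | h <;> subst h <;>
          norm_num [plurigenus, Basket.corr,
            show Finset.Icc 1 (4-1) = ({1,2,3} : Finset ℕ) from rfl,
            show Finset.Icc 1 (5-1) = ({1,2,3,4} : Finset ℕ) from rfl,
            Finset.sum_insert, Finset.mem_insert, Finset.mem_singleton,
            Finset.sum_singleton]
end

section
/- Let K be a positive rational number and B a finite multiset of baskets such that P_2(K, B) = 1, P_3(K, B) = 2, P_4(K, B) = 3 and P_5(K, B) = 4. Then the multiset of pairs (r_Q, b'_Q) for Q ∈ B, together with K, is one of exactly four possibilities: {(2,1), (3,1), (4,1)} with K = 1/12; {(2,1), (3,1), (5,1)} with K = 1/30; {(2,1), (7,2)} with K = 1/14; {(4,1), (5,2)} with K = 1/20. Here for Q = (b, r) we write r_Q = r and b'_Q = b'. -/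
/- ### Auxiliary machinery -/

def fval (b r j : ℕ) : ℚ :=
  ((b * j % r : ℕ) : ℚ) * ((r : ℚ) - ((b * j % r : ℕ) : ℚ)) / (2 * (r : ℚ))

def L₀ : List ((ℕ × ℕ) × (ℕ × ℕ × ℕ × ℕ)) :=
  [((2,1),(1260,0,1260,0)), ((3,1),(1680,1680,0,1680)), ((4,1),(1890,2520,1890,0)),
   ((5,1),(2016,3024,3024,2016)), ((5,2),(3024,2016,2016,3024)), ((6,1),(2100,3360,3780,3360)),
   ((7,1),(2160,3600,4320,4320)), ((7,2),(3600,4320,2160,2160)), ((7,3),(4320,2160,3600,3600))]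

def vnull : (ℕ × ℕ) × (ℕ × ℕ × ℕ × ℕ) := ((0,0),(0,0,0,0))

def L₁ : List ((ℕ × ℕ) × (ℕ × ℕ × ℕ × ℕ)) := vnull :: L₀

lemma flt_iff (b r j : ℕ) (hr : 0 < r) : fval b r j < 1 ↔ b*j % r * (r - b*j % r) < 2*r := by
  have hc : b*j % r < r := Nat.mod_lt _ hr
  rw [fval, div_lt_one (by positivity)]
  rw [show ((b*j % r : ℕ) : ℚ) * ((r:ℚ) - ((b*j % r : ℕ):ℚ)) = ((b*j % r * (r - b*j % r) : ℕ) : ℚ) by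
    push_cast [Nat.cast_sub hc.le]; ring]
  rw [show (2 * (r:ℚ)) = ((2*r : ℕ) : ℚ) by push_cast; ring]
  exact Nat.cast_lt

lemma hsmall (c r : ℕ) (hr : 10 ≤ r) (hc : c < r) (hlt : c * (r - c) < 2*r) : c ≤ 2 ∨ r - 2 ≤ c := by
  by_contra hcon
  push_neg at hcon
  have key : 3 * (r - 3) ≤ c * (r - c) := by
    zify [show c ≤ r from hc.le, show (3:ℕ) ≤ r by omega]
    nlinarith [mul_nonneg (by omega : (0:ℤ) ≤ (c:ℤ) - 3)
      (by zify [hc.le] at hcon ⊢; omega : (0:ℤ) ≤ ((r:ℤ) - (c:ℤ)) - 3)]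
  omega

lemma classify (b r : ℕ) (hb : 0 < b) (hbr : b < r) (hcop : Nat.gcd b r = 1)
    (h1 : fval b r 1 < 1) (h2 : fval b r 2 < 1) (h3 : fval b r 3 < 1) (h4 : fval b r 4 < 1) :
    ∃ v ∈ L₀, (r, if 2*b ≤ r then b else r - b) = v.1 ∧
      fval b r 1 = (v.2.1 : ℚ)/5040 ∧ fval b r 2 = (v.2.2.1 : ℚ)/5040 ∧
      fval b r 3 = (v.2.2.2.1 : ℚ)/5040 ∧ fval b r 4 = (v.2.2.2.2 : ℚ)/5040 := by
  have hr : 0 < r := by omega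
  have n1 := (flt_iff b r 1 hr).mp h1
  have n2 := (flt_iff b r 2 hr).mp h2
  have n3 := (flt_iff b r 3 hr).mp h3
  have n4 := (flt_iff b r 4 hr).mp h4
  rcases le_or_gt r 9 with h9 | h9
  · have hr2 : 2 ≤ r := by omega
    clear h1 h2 h3 h4 hr
    interval_cases r <;> interval_cases b <;>
      first
      | exact absurd hcop (by decide)
      | (exfalso; revert n1 n2 n3 n4; decide)
      | exact ⟨((2,1),(1260,0,1260,0)), by decide, by decide, by norm_num [fval], by norm_num [fval], by norm_num [fval], by norm_num [fval]⟩
      | exact ⟨((3,1),(1680,1680,0,1680)), by decide, by decide, by norm_num [fval], by norm_num [fval], by norm_num [fval], by norm_num [fval]⟩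
      | exact ⟨((4,1),(1890,2520,1890,0)), by decide, by decide, by norm_num [fval], by norm_num [fval], by norm_num [fval], by norm_num [fval]⟩
      | exact ⟨((5,1),(2016,3024,3024,2016)), by decide, by decide, by norm_num [fval], by norm_num [fval], by norm_num [fval], by norm_num [fval]⟩
      | exact ⟨((5,2),(3024,2016,2016,3024)), by decide, by decide, by norm_num [fval], by norm_num [fval], by norm_num [fval], by norm_num [fval]⟩
      | exact ⟨((6,1),(2100,3360,3780,3360)), by decide, by decide, by norm_num [fval], by norm_num [fval], by norm_num [fval], by norm_num [fval]⟩
      | exact ⟨((7,1),(2160,3600,4320,4320)), by decide, by decide, by norm_num [fval], by norm_num [fval], by norm_num [fval], by norm_num [fval]⟩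
      | exact ⟨((7,2),(3600,4320,2160,2160)), by decide, by decide, by norm_num [fval], by norm_num [fval], by norm_num [fval], by norm_num [fval]⟩
      | exact ⟨((7,3),(4320,2160,3600,3600)), by decide, by decide, by norm_num [fval], by norm_num [fval], by norm_num [fval], by norm_num [fval]⟩
  · exfalso
    have hr10 : 10 ≤ r := h9
    have c1 : b ≤ 2 ∨ r - 2 ≤ b := by
      have := hsmall (b*1 % r) r hr10 (Nat.mod_lt _ (by omega)) n1
      rwa [mul_one, Nat.mod_eq_of_lt (by omega)] at this
    have hb4 : b = 1 ∨ b = 2 ∨ b = r - 2 ∨ b = r - 1 := by omega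
    rcases hb4 with rfl | rfl | hbe | hbe
    · have e : 1*3 % r = 3 := by rw [Nat.mod_eq_of_lt (by omega)]
      have := hsmall (1*3 % r) r hr10 (Nat.mod_lt _ (by omega)) n3
      rw [e] at this; omega
    · have e : 2*2 % r = 4 := by rw [Nat.mod_eq_of_lt (by omega)]
      have := hsmall (2*2 % r) r hr10 (Nat.mod_lt _ (by omega)) n2
      rw [e] at this; omega
    · have e : b*2 % r = r - 4 := by
        rw [show b*2 = (r-4) + 1*r by omega, Nat.add_mul_mod_self_right, Nat.mod_eq_of_lt (by omega)]
      have := hsmall (b*2 % r) r hr10 (Nat.mod_lt _ (by omega)) n2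
      rw [e] at this; omega
    · have e : b*3 % r = r - 3 := by
        rw [show b*3 = (r-3) + 2*r by omega, Nat.add_mul_mod_self_right, Nat.mod_eq_of_lt (by omega)]
      have := hsmall (b*3 % r) r hr10 (Nat.mod_lt _ (by omega)) n3
      rw [e] at this; omega

set_option maxRecDepth 10000 in
set_option synthInstance.maxSize 2000 in
set_option synthInstance.maxHeartbeats 1000000 in
lemma key_s18 : ∀ va ∈ L₁, ∀ vb ∈ L₁, ∀ vc ∈ L₁,
    va.2.2.1 + vb.2.2.1 + vc.2.2.1 + 15120 = 4 * (va.2.1 + vb.2.1 + vc.2.1) →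
    va.2.2.2.1 + vb.2.2.2.1 + vc.2.2.2.1 + 40320 = 9 * (va.2.1 + vb.2.1 + vc.2.1) →
    va.2.2.2.2 + vb.2.2.2.2 + vc.2.2.2.2 + 75600 = 16 * (va.2.1 + vb.2.1 + vc.2.1) →
    va.2.1 + vb.2.1 + vc.2.1 < 5040 →
    (({va.1, vb.1, vc.1} : Multiset (ℕ × ℕ)) = {(2,1),(3,1),(4,1)} ∧ va.2.1 + vb.2.1 + vc.2.1 = 4830) ∨
    (({va.1, vb.1, vc.1} : Multiset (ℕ × ℕ)) = {(2,1),(3,1),(5,1)} ∧ va.2.1 + vb.2.1 + vc.2.1 = 4956) ∨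
    (({va.1, vb.1, vc.1} : Multiset (ℕ × ℕ)) = {(0,0),(2,1),(7,2)} ∧ va.2.1 + vb.2.1 + vc.2.1 = 4860) ∨
    (({va.1, vb.1, vc.1} : Multiset (ℕ × ℕ)) = {(0,0),(4,1),(5,2)} ∧ va.2.1 + vb.2.1 + vc.2.1 = 4914) := by
  decide

lemma pair_ne (Q : Basket) : (Q.r, Q.b') ≠ ((0,0) : ℕ × ℕ) := by
  intro h
  have h1 : Q.r = 0 := congrArg Prod.fst h
  have := Q.b_pos
  have := Q.b_lt_r
  omega

lemma helper {x y u v : ℕ × ℕ}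
    (h : ({x, y, (0,0)} : Multiset (ℕ × ℕ)) = {(0,0), u, v}) :
    ({x, y} : Multiset (ℕ × ℕ)) = {u, v} := by
  apply (Multiset.cons_inj_right ((0,0) : ℕ × ℕ)).mp
  show ((0,0) : ℕ × ℕ) ::ₘ x ::ₘ y ::ₘ 0 = (0,0) ::ₘ u ::ₘ v ::ₘ 0
  rw [Multiset.cons_swap ((0,0) : ℕ × ℕ) x, Multiset.cons_swap ((0,0) : ℕ × ℕ) y]
  exact h

lemma Lmin : ∀ v ∈ L₀, v.1 ≠ ((0,0) : ℕ × ℕ) → 1260 ≤ v.2.1 := by decide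

lemma Lmax : ∀ v ∈ L₀, v.2.1 ≤ 4320 := by decide

lemma corr_eq_two (Q : Basket) : Q.corr 2 = fval Q.b Q.r 1 := by
  rw [Basket.corr, show (2-1 : ℕ) = 1 from rfl, show (Finset.Icc 1 1 : Finset ℕ) = {1} from rfl,
    Finset.sum_singleton]
  rfl

lemma corr_eq_three (Q : Basket) : Q.corr 3 = fval Q.b Q.r 1 + fval Q.b Q.r 2 := by
  rw [Basket.corr, show (3-1 : ℕ) = 2 from rfl, show (Finset.Icc 1 2 : Finset ℕ) = {1, 2} from rfl]
  rw [Finset.sum_insert (by decide), Finset.sum_singleton]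
  rfl

lemma corr_eq_four (Q : Basket) : Q.corr 4 = fval Q.b Q.r 1 + fval Q.b Q.r 2 + fval Q.b Q.r 3 := by
  rw [Basket.corr, show (4-1 : ℕ) = 3 from rfl, show (Finset.Icc 1 3 : Finset ℕ) = {1, 2, 3} from rfl]
  rw [Finset.sum_insert (by decide), Finset.sum_insert (by decide), Finset.sum_singleton]
  show _ = fval _ _ 1 + fval _ _ 2 + fval _ _ 3
  rw [fval, fval, fval]; ring

lemma corr_eq_five (Q : Basket) :
    Q.corr 5 = fval Q.b Q.r 1 + fval Q.b Q.r 2 + fval Q.b Q.r 3 + fval Q.b Q.r 4 := by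
  rw [Basket.corr, show (5-1 : ℕ) = 4 from rfl,
    show (Finset.Icc 1 4 : Finset ℕ) = {1, 2, 3, 4} from rfl]
  rw [Finset.sum_insert (by decide), Finset.sum_insert (by decide), Finset.sum_insert (by decide),
    Finset.sum_singleton]
  show _ = fval _ _ 1 + fval _ _ 2 + fval _ _ 3 + fval _ _ 4
  rw [fval, fval, fval, fval]; ring

set_option maxHeartbeats 2000000 in
theorem stmt18 (K : ℚ) (hK : 0 < K) (B : Multiset Basket)
    (h2 : plurigenus K B 2 = 1) (h3 : plurigenus K B 3 = 2)
    (h4 : plurigenus K B 4 = 3) (h5 : plurigenus K B 5 = 4) :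
    (B.map (fun Q => (Q.r, Q.b')) = ({(2, 1), (3, 1), (4, 1)} : Multiset (ℕ × ℕ)) ∧
        K = 1 / 12) ∨
    (B.map (fun Q => (Q.r, Q.b')) = ({(2, 1), (3, 1), (5, 1)} : Multiset (ℕ × ℕ)) ∧
        K = 1 / 30) ∨
    (B.map (fun Q => (Q.r, Q.b')) = ({(2, 1), (7, 2)} : Multiset (ℕ × ℕ)) ∧
        K = 1 / 14) ∨
    (B.map (fun Q => (Q.r, Q.b')) = ({(4, 1), (5, 2)} : Multiset (ℕ × ℕ)) ∧
        K = 1 / 20) := by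
  have hrpos : ∀ Q : Basket, 0 < Q.r := fun Q => lt_trans Q.b_pos Q.b_lt_r
  have fnn : ∀ (Q : Basket) (j : ℕ), 0 ≤ fval Q.b Q.r j := by
    intro Q j
    have hc : Q.b * j % Q.r < Q.r := Nat.mod_lt _ (hrpos Q)
    have hcast : ((Q.b * j % Q.r : ℕ) : ℚ) ≤ (Q.r : ℚ) := by exact_mod_cast hc.le
    apply div_nonneg
    · apply mul_nonneg (by positivity)
      linarith
    · positivity
  -- rewrite the plurigenus equations
  have hm2 : (B.map (fun Q => Q.corr 2)).sum = (B.map (fun Q => fval Q.b Q.r 1)).sum := by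
    rw [Multiset.map_congr rfl (fun Q _ => corr_eq_two Q)]
  have hm3 : (B.map (fun Q => Q.corr 3)).sum =
      (B.map (fun Q => fval Q.b Q.r 1)).sum + (B.map (fun Q => fval Q.b Q.r 2)).sum := by
    rw [Multiset.map_congr rfl (fun Q _ => corr_eq_three Q), Multiset.sum_map_add]
  have hm4 : (B.map (fun Q => Q.corr 4)).sum =
      (B.map (fun Q => fval Q.b Q.r 1)).sum + (B.map (fun Q => fval Q.b Q.r 2)).sum +
      (B.map (fun Q => fval Q.b Q.r 3)).sum := by
    rw [Multiset.map_congr rfl (fun Q _ => corr_eq_four Q), Multiset.sum_map_add,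
      Multiset.sum_map_add]
  have hm5 : (B.map (fun Q => Q.corr 5)).sum =
      (B.map (fun Q => fval Q.b Q.r 1)).sum + (B.map (fun Q => fval Q.b Q.r 2)).sum +
      (B.map (fun Q => fval Q.b Q.r 3)).sum + (B.map (fun Q => fval Q.b Q.r 4)).sum := by
    rw [Multiset.map_congr rfl (fun Q _ => corr_eq_five Q), Multiset.sum_map_add,
      Multiset.sum_map_add, Multiset.sum_map_add]
  rw [plurigenus, hm2] at h2
  rw [plurigenus, hm3] at h3
  rw [plurigenus, hm4] at h4
  rw [plurigenus, hm5] at h5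
  norm_num at h2 h3 h4 h5
  -- bounds on the sums
  have hle : ∀ (j : ℕ), ∀ Q ∈ B, fval Q.b Q.r j ≤ (B.map (fun Q => fval Q.b Q.r j)).sum := by
    intro j Q hQ
    exact Multiset.single_le_sum
      (fun x hx => by obtain ⟨Q', _, rfl⟩ := Multiset.mem_map.mp hx; exact fnn Q' j) _
      (Multiset.mem_map_of_mem _ hQ)
  have hS1lt : (B.map (fun Q => fval Q.b Q.r 1)).sum < 1 := by linarith
  have hS2lt : (B.map (fun Q => fval Q.b Q.r 2)).sum < 1 := by linarith
  have hS3lt : (B.map (fun Q => fval Q.b Q.r 3)).sum < 1 := by linarith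
  have hS4lt : (B.map (fun Q => fval Q.b Q.r 4)).sum < 1 := by linarith
  have hcl : ∀ Q ∈ B, ∃ v ∈ L₀, (Q.r, Q.b') = v.1 ∧
      fval Q.b Q.r 1 = (v.2.1 : ℚ)/5040 ∧ fval Q.b Q.r 2 = (v.2.2.1 : ℚ)/5040 ∧
      fval Q.b Q.r 3 = (v.2.2.2.1 : ℚ)/5040 ∧ fval Q.b Q.r 4 = (v.2.2.2.2 : ℚ)/5040 := by
    intro Q hQ
    have := classify Q.b Q.r Q.b_pos Q.b_lt_r Q.coprime
      (lt_of_le_of_lt (hle 1 Q hQ) hS1lt) (lt_of_le_of_lt (hle 2 Q hQ) hS2lt)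
      (lt_of_le_of_lt (hle 3 Q hQ) hS3lt) (lt_of_le_of_lt (hle 4 Q hQ) hS4lt)
    simpa [Basket.b'] using this
  -- at most three baskets
  have hq14 : ∀ Q ∈ B, (1:ℚ)/4 ≤ fval Q.b Q.r 1 := by
    intro Q hQ
    obtain ⟨v, hv, hv1, e1, -⟩ := hcl Q hQ
    have hne : v.1 ≠ ((0,0) : ℕ × ℕ) := by rw [← hv1]; exact pair_ne Q
    have hge : 1260 ≤ v.2.1 := Lmin v hv hne
    have hgeq : (1260 : ℚ) ≤ (v.2.1 : ℚ) := by exact_mod_cast hge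
    rw [e1]; linarith
  have hcard : B.card ≤ 3 := by
    by_contra hc
    push_neg at hc
    have h14 : (B.card : ℚ) * (1/4) ≤ (B.map (fun Q => fval Q.b Q.r 1)).sum := by
      have := Multiset.card_nsmul_le_sum (s := B.map (fun Q => fval Q.b Q.r 1)) (a := (1/4 : ℚ))
        (fun x hx => by obtain ⟨Q', hQ', rfl⟩ := Multiset.mem_map.mp hx; exact hq14 Q' hQ')
      rwa [Multiset.card_map, nsmul_eq_mul] at this
    have h4c : (4 : ℚ) ≤ (B.card : ℚ) := by exact_mod_cast hc
    linarith
  have hcases : B.card = 0 ∨ B.card = 1 ∨ B.card = 2 ∨ B.card = 3 := by omega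
  rcases hcases with hc | hc | hc | hc
  · -- no baskets: impossible
    rw [Multiset.card_eq_zero] at hc
    subst hc
    simp only [Multiset.map_zero, Multiset.sum_zero] at h2 h5
    linarith
  · -- one basket: impossible
    rw [Multiset.card_eq_one] at hc
    obtain ⟨Q, rfl⟩ := hc
    obtain ⟨v, hv, hv1, e1, e2, e3, e4⟩ := hcl Q (by simp)
    have hmax : v.2.1 ≤ 4320 := Lmax v hv
    simp only [Multiset.map_singleton, Multiset.sum_singleton] at h2 h3 h4 h5
    rw [e1] at h2 h3 h4 h5
    rw [e2] at h3 h4 h5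
    rw [e3] at h4 h5
    rw [e4] at h5
    have c1 : (v.2.1 : ℚ) ≤ 4320 := by exact_mod_cast hmax
    have c2 : (0:ℚ) ≤ (v.2.2.1 : ℚ) := Nat.cast_nonneg _
    have c3 : (0:ℚ) ≤ (v.2.2.2.1 : ℚ) := Nat.cast_nonneg _
    have c4 : (0:ℚ) ≤ (v.2.2.2.2 : ℚ) := Nat.cast_nonneg _
    linarith
  · -- two baskets
    rw [Multiset.card_eq_two] at hc
    obtain ⟨Q1, Q2, rfl⟩ := hc
    obtain ⟨va, hva, hva1, a1, a2, a3, a4⟩ := hcl Q1 (by simp)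
    obtain ⟨vb, hvb, hvb1, b1, b2, b3, b4⟩ := hcl Q2 (by simp)
    simp only [Multiset.insert_eq_cons, Multiset.map_cons, Multiset.map_singleton, Multiset.sum_cons,
      Multiset.sum_singleton] at h2 h3 h4 h5
    simp only [a1, a2, a3, a4, b1, b2, b3, b4] at h2 h3 h4 h5
    have E2 : va.2.2.1 + vb.2.2.1 + vnull.2.2.1 + 15120 = 4 * (va.2.1 + vb.2.1 + vnull.2.1) := by
      have hq : ((va.2.2.1 : ℚ) + vb.2.2.1) + 15120 = 4*((va.2.1 : ℚ) + vb.2.1) := by linarith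
      have hn : va.2.2.1 + vb.2.2.1 + 15120 = 4*(va.2.1 + vb.2.1) := by exact_mod_cast hq
      simp only [vnull]
      omega
    have E3 : va.2.2.2.1 + vb.2.2.2.1 + vnull.2.2.2.1 + 40320 =
        9 * (va.2.1 + vb.2.1 + vnull.2.1) := by
      have hq : ((va.2.2.2.1 : ℚ) + vb.2.2.2.1) + 40320 = 9*((va.2.1 : ℚ) + vb.2.1) := by linarith
      have hn : va.2.2.2.1 + vb.2.2.2.1 + 40320 = 9*(va.2.1 + vb.2.1) := by exact_mod_cast hq
      simp only [vnull]
      omega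
    have E4 : va.2.2.2.2 + vb.2.2.2.2 + vnull.2.2.2.2 + 75600 =
        16 * (va.2.1 + vb.2.1 + vnull.2.1) := by
      have hq : ((va.2.2.2.2 : ℚ) + vb.2.2.2.2) + 75600 = 16*((va.2.1 : ℚ) + vb.2.1) := by linarith
      have hn : va.2.2.2.2 + vb.2.2.2.2 + 75600 = 16*(va.2.1 + vb.2.1) := by exact_mod_cast hq
      simp only [vnull]
      omega
    have ET : va.2.1 + vb.2.1 + vnull.2.1 < 5040 := by
      have hq : ((va.2.1 : ℚ) + vb.2.1) < 5040 := by linarith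
      have hn : va.2.1 + vb.2.1 < 5040 := by exact_mod_cast hq
      simp only [vnull]
      omega
    have R := key_s18 va (List.mem_cons_of_mem _ hva) vb (List.mem_cons_of_mem _ hvb) vnull
      (List.mem_cons_self) E2 E3 E4 ET
    have hmap : Multiset.map (fun Q => (Q.r, Q.b')) ({Q1, Q2} : Multiset Basket)
        = ({va.1, vb.1} : Multiset (ℕ × ℕ)) := by
      simp only [Multiset.insert_eq_cons, Multiset.map_cons, Multiset.map_singleton]
      rw [hva1, hvb1]
    have hxa : va.1 ≠ ((0,0) : ℕ × ℕ) := by rw [← hva1]; exact pair_ne Q1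
    have hxb : vb.1 ≠ ((0,0) : ℕ × ℕ) := by rw [← hvb1]; exact pair_ne Q2
    rcases R with ⟨hM, hT⟩ | ⟨hM, hT⟩ | ⟨hM, hT⟩ | ⟨hM, hT⟩
    · exfalso
      have hmem : ((0,0) : ℕ × ℕ) ∈ ({(2,1),(3,1),(4,1)} : Multiset (ℕ × ℕ)) := by
        rw [← hM]; simp [vnull]
      revert hmem; decide
    · exfalso
      have hmem : ((0,0) : ℕ × ℕ) ∈ ({(2,1),(3,1),(5,1)} : Multiset (ℕ × ℕ)) := by
        rw [← hM]; simp [vnull]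
      revert hmem; decide
    · refine Or.inr (Or.inr (Or.inl ⟨?_, ?_⟩))
      · rw [hmap]
        exact helper (by simpa [vnull] using hM)
      · have hn : va.2.1 + vb.2.1 = 4860 := by
          have := hT; simp only [vnull] at this; omega
        have hq : (va.2.1 : ℚ) + vb.2.1 = 4860 := by exact_mod_cast hn
        linarith
    · refine Or.inr (Or.inr (Or.inr ⟨?_, ?_⟩))
      · rw [hmap]
        exact helper (by simpa [vnull] using hM)
      · have hn : va.2.1 + vb.2.1 = 4914 := by
          have := hT; simp only [vnull] at this; omega
        have hq : (va.2.1 : ℚ) + vb.2.1 = 4914 := by exact_mod_cast hn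
        linarith
  · -- three baskets
    rw [Multiset.card_eq_three] at hc
    obtain ⟨Q1, Q2, Q3, rfl⟩ := hc
    obtain ⟨va, hva, hva1, a1, a2, a3, a4⟩ := hcl Q1 (by simp)
    obtain ⟨vb, hvb, hvb1, b1, b2, b3, b4⟩ := hcl Q2 (by simp)
    obtain ⟨vc, hvc, hvc1, c1, c2, c3, c4⟩ := hcl Q3 (by simp)
    simp only [Multiset.insert_eq_cons, Multiset.map_cons, Multiset.map_singleton, Multiset.sum_cons,
      Multiset.sum_singleton] at h2 h3 h4 h5
    simp only [a1, a2, a3, a4, b1, b2, b3, b4, c1, c2, c3, c4] at h2 h3 h4 h5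
    have E2 : va.2.2.1 + vb.2.2.1 + vc.2.2.1 + 15120 = 4 * (va.2.1 + vb.2.1 + vc.2.1) := by
      have hq : ((va.2.2.1 : ℚ) + vb.2.2.1 + vc.2.2.1) + 15120 =
          4*((va.2.1 : ℚ) + vb.2.1 + vc.2.1) := by linarith
      exact_mod_cast hq
    have E3 : va.2.2.2.1 + vb.2.2.2.1 + vc.2.2.2.1 + 40320 = 9 * (va.2.1 + vb.2.1 + vc.2.1) := by
      have hq : ((va.2.2.2.1 : ℚ) + vb.2.2.2.1 + vc.2.2.2.1) + 40320 =
          9*((va.2.1 : ℚ) + vb.2.1 + vc.2.1) := by linarith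
      exact_mod_cast hq
    have E4 : va.2.2.2.2 + vb.2.2.2.2 + vc.2.2.2.2 + 75600 = 16 * (va.2.1 + vb.2.1 + vc.2.1) := by
      have hq : ((va.2.2.2.2 : ℚ) + vb.2.2.2.2 + vc.2.2.2.2) + 75600 =
          16*((va.2.1 : ℚ) + vb.2.1 + vc.2.1) := by linarith
      exact_mod_cast hq
    have ET : va.2.1 + vb.2.1 + vc.2.1 < 5040 := by
      have hq : ((va.2.1 : ℚ) + vb.2.1 + vc.2.1) < 5040 := by linarith
      exact_mod_cast hq
    have R := key_s18 va (List.mem_cons_of_mem _ hva) vb (List.mem_cons_of_mem _ hvb) vc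
      (List.mem_cons_of_mem _ hvc) E2 E3 E4 ET
    have hmap : Multiset.map (fun Q => (Q.r, Q.b')) ({Q1, Q2, Q3} : Multiset Basket)
        = ({va.1, vb.1, vc.1} : Multiset (ℕ × ℕ)) := by
      simp only [Multiset.insert_eq_cons, Multiset.map_cons, Multiset.map_singleton]
      rw [hva1, hvb1, hvc1]
    have hxa : va.1 ≠ ((0,0) : ℕ × ℕ) := by rw [← hva1]; exact pair_ne Q1
    have hxb : vb.1 ≠ ((0,0) : ℕ × ℕ) := by rw [← hvb1]; exact pair_ne Q2
    have hxc : vc.1 ≠ ((0,0) : ℕ × ℕ) := by rw [← hvc1]; exact pair_ne Q3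
    rcases R with ⟨hM, hT⟩ | ⟨hM, hT⟩ | ⟨hM, hT⟩ | ⟨hM, hT⟩
    · refine Or.inl ⟨?_, ?_⟩
      · rw [hmap]; exact hM
      · have hq : (va.2.1 : ℚ) + vb.2.1 + vc.2.1 = 4830 := by exact_mod_cast hT
        linarith
    · refine Or.inr (Or.inl ⟨?_, ?_⟩)
      · rw [hmap]; exact hM
      · have hq : (va.2.1 : ℚ) + vb.2.1 + vc.2.1 = 4956 := by exact_mod_cast hT
        linarith
    · exfalso
      have hmem : ((0,0) : ℕ × ℕ) ∈ ({va.1, vb.1, vc.1} : Multiset (ℕ × ℕ)) := by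
        rw [hM]; simp
      simp only [Multiset.insert_eq_cons, Multiset.mem_cons, Multiset.mem_singleton] at hmem
      rcases hmem with h | h | h
      · exact hxa h.symm
      · exact hxb h.symm
      · exact hxc h.symm
    · exfalso
      have hmem : ((0,0) : ℕ × ℕ) ∈ ({va.1, vb.1, vc.1} : Multiset (ℕ × ℕ)) := by
        rw [hM]; simp
      simp only [Multiset.insert_eq_cons, Multiset.mem_cons, Multiset.mem_singleton] at hmem
      rcases hmem with h | h | h
      · exact hxa h.symm
      · exact hxb h.symm
      · exact hxc h.symm
end
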